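/- Let σ > 0, σ0 > 0, τ0 > 0 and N a positive integer, and let z = 0 (no testing correction). Define R(β) = E_{τ ~ N(τ0, σ0²)}[τ · Φ((Nτ + τ0β)/(2√N σ))]. Then R is strictly increasing on [0, 4σ²/σ0²) and strictly decreasing on (4σ²/σ0², ∞); in particular the Bayes-optimal shrinkage β_bayes = 4σ²/σ0² maximizes R when z = 0, and for z > 0 the maximizer strictly exceeds β_bayes. -/

import Mathlib

open Real MeasureTheory

/-- Standard normal CDF. -/
noncomputable def Phi (x : ℝ) : ℝ :=
  ∫ t in Set.Iic x, (Real.sqrt (2 * Real.pi))⁻¹ * Real.exp (-t ^ 2 / 2)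

/-- Density of a normal distribution with mean `μ` and variance `v`. -/
noncomputable def gpdf (μ v x : ℝ) : ℝ :=
  (Real.sqrt (2 * Real.pi * v))⁻¹ * Real.exp (-(x - μ) ^ 2 / (2 * v))

noncomputable def phi (x : ℝ) : ℝ := (Real.sqrt (2 * Real.pi))⁻¹ * Real.exp (-x ^ 2 / 2)

lemma phi_pos (x : ℝ) : 0 < phi x := by
  have : 0 < Real.sqrt (2 * Real.pi) := Real.sqrt_pos.2 (by positivity)
  exact mul_pos (inv_pos.2 this) (Real.exp_pos _)

lemma phi_le (x : ℝ) : phi x ≤ (Real.sqrt (2 * Real.pi))⁻¹ := by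
  have h1 : Real.exp (-x ^ 2 / 2) ≤ 1 := by
    rw [Real.exp_le_one_iff]; nlinarith [sq_nonneg x]
  have h2 : (0:ℝ) ≤ (Real.sqrt (2 * Real.pi))⁻¹ := by positivity
  calc phi x ≤ (Real.sqrt (2 * Real.pi))⁻¹ * 1 := mul_le_mul_of_nonneg_left h1 h2
  _ = _ := mul_one _

lemma continuous_phi : Continuous phi := by
  unfold phi; fun_prop

lemma phi_eq (x : ℝ) : phi x = (Real.sqrt (2 * Real.pi))⁻¹ * Real.exp (-(1/2) * x ^ 2) := by
  unfold phi; ring_nf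

lemma integrable_phi : Integrable phi := by
  have := (integrable_exp_neg_mul_sq (by norm_num : (0:ℝ) < 1/2)).const_mul
    (Real.sqrt (2 * Real.pi))⁻¹
  refine this.congr ?_
  filter_upwards with x
  rw [phi_eq]

lemma integral_phi : ∫ x, phi x = 1 := by
  have h : ∫ x : ℝ, Real.exp (-(1/2) * x ^ 2) = Real.sqrt (Real.pi / (1/2)) :=
    integral_gaussian (1/2)
  have : ∫ x, phi x = (Real.sqrt (2 * Real.pi))⁻¹ * Real.sqrt (Real.pi / (1/2)) := by
    simp_rw [phi_eq]
    rw [integral_const_mul, h]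
  rw [this]
  have : Real.pi / (1/2) = 2 * Real.pi := by ring
  rw [this]
  have hpos : (0:ℝ) < Real.sqrt (2 * Real.pi) := Real.sqrt_pos.2 (by positivity)
  field_simp

lemma Phi_eq (x : ℝ) : Phi x = ∫ t in Set.Iic x, phi t := rfl

lemma Phi_nonneg (x : ℝ) : 0 ≤ Phi x := by
  rw [Phi_eq]
  exact setIntegral_nonneg measurableSet_Iic (fun t _ => (phi_pos t).le)

lemma Phi_le_one (x : ℝ) : Phi x ≤ 1 := by
  rw [Phi_eq, ← integral_phi]
  exact setIntegral_le_integral integrable_phi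
    (Filter.Eventually.of_forall fun t => (phi_pos t).le)

lemma hasDerivAt_Phi (x : ℝ) : HasDerivAt Phi (phi x) x := by
  have key : ∀ u : ℝ, Phi u = Phi 0 + ∫ t in (0:ℝ)..u, phi t := by
    intro u
    have := intervalIntegral.integral_Iic_sub_Iic (a := 0) (b := u)
      (integrable_phi.integrableOn) (integrable_phi.integrableOn)
    rw [Phi_eq, Phi_eq (0:ℝ)]
    linarith
  have h : HasDerivAt (fun u => Phi 0 + ∫ t in (0:ℝ)..u, phi t) (phi x) x := by
    refine HasDerivAt.const_add _ ?_
    exact intervalIntegral.integral_hasDerivAt_right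
      (continuous_phi.intervalIntegrable 0 x)
      (continuous_phi.stronglyMeasurableAtFilter _ _)
      continuous_phi.continuousAt
  exact h.congr_of_eventuallyEq (Filter.Eventually.of_forall fun u => (key u))

lemma continuous_Phi : Continuous Phi :=
  continuous_iff_continuousAt.2 fun x => (hasDerivAt_Phi x).continuousAt

lemma gpdf_eq {v : ℝ} (hv : 0 < v) (μ x : ℝ) :
    gpdf μ v x = (Real.sqrt (2 * Real.pi * v))⁻¹ * Real.exp (-(1/(2*v)) * (x - μ) ^ 2) := by
  unfold gpdf
  congr 2
  field_simp

lemma gpdf_pos {v : ℝ} (hv : 0 < v) (μ x : ℝ) : 0 < gpdf μ v x := by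
  unfold gpdf
  have : 0 < Real.sqrt (2 * Real.pi * v) := Real.sqrt_pos.2 (by positivity)
  positivity

lemma continuous_gpdf (μ v : ℝ) : Continuous (gpdf μ v) := by
  unfold gpdf; fun_prop

lemma integrable_gpdf {v : ℝ} (hv : 0 < v) (μ : ℝ) : Integrable (gpdf μ v) := by
  have h := ((integrable_exp_neg_mul_sq (by positivity : (0:ℝ) < 1/(2*v))).const_mul
    (Real.sqrt (2 * Real.pi * v))⁻¹).comp_sub_right μ
  exact h.congr (Filter.Eventually.of_forall fun x => by rw [gpdf_eq hv])

lemma integral_gpdf {v : ℝ} (hv : 0 < v) (μ : ℝ) : ∫ x, gpdf μ v x = 1 := by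
  simp_rw [gpdf_eq hv]
  rw [integral_const_mul]
  have : (∫ x : ℝ, Real.exp (-(1/(2*v)) * (x - μ) ^ 2))
      = ∫ x : ℝ, Real.exp (-(1/(2*v)) * x ^ 2) := by
    have := integral_add_right_eq_self (μ := volume) (fun x : ℝ => Real.exp (-(1/(2*v)) * x ^ 2)) (-μ)
    rw [← this]
    simp_rw [sub_eq_add_neg]
  rw [this, integral_gaussian]
  rw [show Real.pi / (1/(2*v)) = 2 * Real.pi * v by field_simp]
  have hpos : (0:ℝ) < Real.sqrt (2 * Real.pi * v) := Real.sqrt_pos.2 (by positivity)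
  field_simp

lemma integrable_id_mul_gpdf {v : ℝ} (hv : 0 < v) (μ : ℝ) :
    Integrable (fun x => x * gpdf μ v x) := by
  have h1 : Integrable (fun x : ℝ => x * gpdf 0 v x) := by
    have := ((integrable_mul_exp_neg_mul_sq (by positivity : (0:ℝ) < 1/(2*v))).const_mul
      (Real.sqrt (2 * Real.pi * v))⁻¹)
    refine this.congr (Filter.Eventually.of_forall fun x => ?_)
    simp only
    rw [gpdf_eq hv]
    simp only [sub_zero]
    ring
  have h2 : Integrable (fun x : ℝ => (x + μ) * gpdf 0 v x) := by
    have := h1.add ((integrable_gpdf hv 0).const_mul μ)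
    refine this.congr (Filter.Eventually.of_forall fun x => ?_)
    simp only [Pi.add_apply]
    ring
  have h3 := h2.comp_sub_right μ
  refine h3.congr (Filter.Eventually.of_forall fun x => ?_)
  simp only
  rw [sub_add_cancel]
  congr 1
  unfold gpdf
  rw [sub_zero]

lemma integral_id_mul_gpdf {v : ℝ} (hv : 0 < v) (μ : ℝ) :
    ∫ x, x * gpdf μ v x = μ := by
  have hodd : ∫ x : ℝ, x * gpdf 0 v x = 0 := by
    have hneg := integral_neg_eq_self (fun x : ℝ => x * gpdf 0 v x) volume
    have : (∫ x : ℝ, (-x) * gpdf 0 v (-x)) = ∫ x : ℝ, -(x * gpdf 0 v x) := by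
      congr 1 with x
      unfold gpdf
      rw [sub_zero, sub_zero, neg_sq]
      ring
    rw [this, integral_neg] at hneg
    linarith
  have key : (∫ x, x * gpdf μ v x) = ∫ x, (x + μ) * gpdf 0 v x := by
    rw [← integral_add_right_eq_self (μ := volume) (fun x => x * gpdf μ v x) μ]
    congr 1 with x
    congr 1
    unfold gpdf
    rw [sub_zero, add_sub_cancel_right]
  rw [key]
  have h1 : Integrable (fun x : ℝ => x * gpdf 0 v x) := by
    have := integrable_id_mul_gpdf hv (0:ℝ)
    exact this
  rw [show (fun x : ℝ => (x + μ) * gpdf 0 v x)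
      = fun x : ℝ => x * gpdf 0 v x + μ * gpdf 0 v x by funext x; ring]
  rw [integral_add h1 ((integrable_gpdf hv 0).const_mul μ), hodd, integral_const_mul,
    integral_gpdf hv, zero_add, mul_one]

lemma integrable_abs_mul_gpdf {v : ℝ} (hv : 0 < v) (μ : ℝ) :
    Integrable (fun x => |x| * gpdf μ v x) := by
  have := (integrable_id_mul_gpdf hv μ).abs
  refine this.congr (Filter.Eventually.of_forall fun x => ?_)
  simp only
  rw [abs_mul, abs_of_nonneg (gpdf_pos hv μ x).le]

set_option maxHeartbeats 1000000 in
theorem stmt_17 (σ σ0 τ0 : ℝ) (hσ : 0 < σ) (hσ0 : 0 < σ0) (hτ0 : 0 < τ0)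
    (N : ℕ) (hN : 0 < N)
    (R : ℝ → ℝ → ℝ)
    (hR : R = fun z β => ∫ τ : ℝ, gpdf τ0 (σ0 ^ 2) τ *
      (τ * Phi ((N * τ + τ0 * β) / (2 * Real.sqrt N * σ) - z)))
    (βbayes : ℝ) (hβbayes : βbayes = 4 * σ ^ 2 / σ0 ^ 2) :
    StrictMonoOn (R 0) (Set.Ico 0 βbayes) ∧
      StrictAntiOn (R 0) (Set.Ioi βbayes) ∧
      (∀ β : ℝ, 0 ≤ β → R 0 β ≤ R 0 βbayes) ∧
      (∀ z βmax : ℝ, 0 < z → 0 ≤ βmax →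
        (∀ β : ℝ, 0 ≤ β → R z β ≤ R z βmax) → βbayes < βmax) := by
  have hNpos : (0:ℝ) < (N:ℝ) := Nat.cast_pos.mpr hN
  have hsqN : (0:ℝ) < Real.sqrt N := Real.sqrt_pos.2 hNpos
  obtain ⟨s, hs_def⟩ : ∃ s : ℝ, s = 2 * Real.sqrt N * σ := ⟨_, rfl⟩
  have hs : 0 < s := by rw [hs_def]; positivity
  obtain ⟨a, ha_def⟩ : ∃ a : ℝ, a = N / s := ⟨_, rfl⟩
  obtain ⟨b, hb_def⟩ : ∃ b : ℝ, b = τ0 / s := ⟨_, rfl⟩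
  have ha : 0 < a := by rw [ha_def]; positivity
  have hb : 0 < b := by rw [hb_def]; positivity
  have hs2 : s ^ 2 = 4 * N * σ ^ 2 := by
    rw [hs_def]
    have : Real.sqrt N ^ 2 = (N:ℝ) := Real.sq_sqrt hNpos.le
    nlinarith [this]
  have hab : a * b = τ0 / (4 * σ ^ 2) := by
    rw [ha_def, hb_def, div_mul_div_comm, ← sq, hs2]
    rw [div_eq_div_iff (by positivity) (by positivity)]
    ring
  have hβb_pos : 0 < βbayes := by rw [hβbayes]; positivity
  obtain ⟨A, hA_def⟩ : ∃ A : ℝ, A = 1 / σ0 ^ 2 + a ^ 2 := ⟨_, rfl⟩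
  have hA : 0 < A := by rw [hA_def]; positivity
  obtain ⟨v, hv_def⟩ : ∃ v : ℝ, v = A⁻¹ := ⟨_, rfl⟩
  have hv : 0 < v := by rw [hv_def]; positivity
  obtain ⟨m, hm_def⟩ : ∃ m : ℝ → ℝ, m = fun β => (τ0 / σ0 ^ 2 - a * b * β) * v := ⟨_, rfl⟩
  obtain ⟨K, hK_def⟩ : ∃ K : ℝ → ℝ, K = fun β =>
      (Real.sqrt (2 * Real.pi * σ0 ^ 2))⁻¹ * (Real.sqrt (2 * Real.pi))⁻¹
      * Real.sqrt (2 * Real.pi * v)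
      * Real.exp (-(τ0 ^ 2 / (2 * σ0 ^ 2) + b ^ 2 * β ^ 2 / 2 - (m β) ^ 2 / (2 * v))) :=
    ⟨_, rfl⟩
  have hK : ∀ β, 0 < K β := by
    intro β
    have h1 : (0:ℝ) < Real.sqrt (2 * Real.pi * σ0 ^ 2) := Real.sqrt_pos.2 (by positivity)
    have h2 : (0:ℝ) < Real.sqrt (2 * Real.pi) := Real.sqrt_pos.2 (by positivity)
    have h3 : (0:ℝ) < Real.sqrt (2 * Real.pi * v) := Real.sqrt_pos.2 (by positivity)
    rw [hK_def]
    positivity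
  -- product identity
  have hprod : ∀ β τ : ℝ, gpdf τ0 (σ0 ^ 2) τ * phi (a * τ + b * β)
      = K β * gpdf (m β) v τ := by
    intro β τ
    have hAne : A ≠ 0 := ne_of_gt hA
    have hexp : -(τ - τ0) ^ 2 / (2 * σ0 ^ 2) + -(a * τ + b * β) ^ 2 / 2
        = -(τ0 ^ 2 / (2 * σ0 ^ 2) + b ^ 2 * β ^ 2 / 2 - (m β) ^ 2 / (2 * v))
          + -(τ - m β) ^ 2 / (2 * v) := by
      rw [hm_def]
      simp only
      rw [hv_def, hA_def]
      field_simp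
      ring
    unfold gpdf phi
    rw [show (Real.sqrt (2 * Real.pi * σ0 ^ 2))⁻¹ * Real.exp (-(τ - τ0) ^ 2 / (2 * σ0 ^ 2)) *
        ((Real.sqrt (2 * Real.pi))⁻¹ * Real.exp (-(a * τ + b * β) ^ 2 / 2))
      = (Real.sqrt (2 * Real.pi * σ0 ^ 2))⁻¹ * (Real.sqrt (2 * Real.pi))⁻¹ *
        (Real.exp (-(τ - τ0) ^ 2 / (2 * σ0 ^ 2)) * Real.exp (-(a * τ + b * β) ^ 2 / 2))
      from by ring]
    rw [← Real.exp_add, hexp, Real.exp_add, hK_def]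
    simp only
    have h3 : (0:ℝ) < Real.sqrt (2 * Real.pi * v) := Real.sqrt_pos.2 (by positivity)
    field_simp
  -- the integrand and its derivative
  have hσ0sq : (0:ℝ) < σ0 ^ 2 := by positivity
  obtain ⟨g, hg_def⟩ : ∃ g : ℝ → ℝ, g = fun τ => gpdf τ0 (σ0 ^ 2) τ := ⟨_, rfl⟩
  obtain ⟨F, hF_def⟩ : ∃ F : ℝ → ℝ → ℝ, F = fun β τ => g τ * (τ * Phi (a * τ + b * β)) :=
    ⟨_, rfl⟩
  obtain ⟨F', hF'_def⟩ : ∃ F' : ℝ → ℝ → ℝ,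
      F' = fun β τ => g τ * (τ * (phi (a * τ + b * β) * b)) := ⟨_, rfl⟩
  have harg : ∀ β τ : ℝ, (N * τ + τ0 * β) / (2 * Real.sqrt N * σ) - 0 = a * τ + b * β := by
    intro β τ
    rw [ha_def, hb_def, ← hs_def]
    field_simp
    ring
  have hR0 : R 0 = fun β => ∫ τ : ℝ, F β τ := by
    rw [hR, hF_def, hg_def]
    funext β
    simp only
    congr 1 with τ
    rw [harg]
  have hRz : ∀ z β : ℝ, R z β = R 0 (β - s / τ0 * z) := by
    intro z β
    rw [hR]
    simp only
    congr 1 with τ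
    congr 2
    rw [← hs_def]
    field_simp
    ring
  -- continuity / measurability
  have hg_cont : Continuous g := by rw [hg_def]; exact continuous_gpdf _ _
  have hF_cont : ∀ β, Continuous (F β) := by
    intro β
    rw [hF_def]
    exact hg_cont.mul (continuous_id.mul (continuous_Phi.comp (by fun_prop)))
  have hF'_cont : ∀ β, Continuous (F' β) := by
    intro β
    rw [hF'_def]
    exact hg_cont.mul (continuous_id.mul (((continuous_phi.comp (by fun_prop)).mul
      continuous_const)))
  obtain ⟨bound, hbd_def⟩ : ∃ bound : ℝ → ℝ,
      bound = fun τ => b * ((Real.sqrt (2 * Real.pi))⁻¹ * (|τ| * g τ)) := ⟨_, rfl⟩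
  have hbound_int : Integrable bound := by
    rw [hbd_def, hg_def]
    exact ((integrable_abs_mul_gpdf hσ0sq τ0).const_mul _).const_mul _
  have hg_nonneg : ∀ τ, 0 ≤ g τ := by
    intro τ; rw [hg_def]; exact (gpdf_pos hσ0sq τ0 τ).le
  have hF_int : ∀ β, Integrable (F β) := by
    intro β
    have hint : Integrable (fun τ : ℝ => |τ| * g τ) := by
      rw [hg_def]; exact integrable_abs_mul_gpdf hσ0sq τ0
    refine hint.mono' (hF_cont β).aestronglyMeasurable ?_
    filter_upwards with τ
    rw [hF_def]
    simp only [Real.norm_eq_abs]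
    rw [abs_mul, abs_of_nonneg (hg_nonneg τ), abs_mul]
    have h1 : |Phi (a * τ + b * β)| ≤ 1 := by
      rw [abs_of_nonneg (Phi_nonneg _)]; exact Phi_le_one _
    calc g τ * (|τ| * |Phi (a * τ + b * β)|) ≤ g τ * (|τ| * 1) := by
          apply mul_le_mul_of_nonneg_left _ (hg_nonneg τ)
          exact mul_le_mul_of_nonneg_left h1 (abs_nonneg τ)
      _ = |τ| * g τ := by ring
  have hF'_bound : ∀ β τ : ℝ, ‖F' β τ‖ ≤ bound τ := by
    intro β τ
    rw [hF'_def, hbd_def]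
    simp only [Real.norm_eq_abs]
    rw [abs_mul, abs_of_nonneg (hg_nonneg τ), abs_mul, abs_mul,
      abs_of_pos (phi_pos _), abs_of_pos hb]
    have h1 := phi_le (a * τ + b * β)
    have h2 : (0:ℝ) ≤ (Real.sqrt (2 * Real.pi))⁻¹ := by positivity
    nlinarith [mul_le_mul_of_nonneg_left h1
      (mul_nonneg (mul_nonneg (hg_nonneg τ) (abs_nonneg τ)) hb.le)]
  have hderiv : ∀ β τ : ℝ, HasDerivAt (fun β' => F β' τ) (F' β τ) β := by
    intro β τ
    have h1 : HasDerivAt (fun β' : ℝ => a * τ + b * β') b β := by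
      simpa using (((hasDerivAt_id β).const_mul b).const_add (a * τ))
    have h2 : HasDerivAt (fun β' : ℝ => Phi (a * τ + b * β')) (phi (a * τ + b * β) * b) β :=
      by have := (hasDerivAt_Phi (a * τ + b * β)).comp β h1; exact this
    have h3 := (h2.const_mul τ).const_mul (g τ)
    rw [hF_def, hF'_def]
    exact h3
  -- the derivative of R 0
  have hD : ∀ β : ℝ, HasDerivAt (R 0) (b * (K β * m β)) β := by
    intro β
    have key := hasDerivAt_integral_of_dominated_loc_of_deriv_le (μ := volume)
      (F := F) (F' := F') (x₀ := β) (bound := bound) (Metric.ball_mem_nhds β one_pos)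
      (Filter.Eventually.of_forall fun β' => (hF_cont β').aestronglyMeasurable)
      (hF_int β) ((hF'_cont β).aestronglyMeasurable)
      (Filter.Eventually.of_forall fun τ => fun β' _ => hF'_bound β' τ)
      hbound_int
      (Filter.Eventually.of_forall fun τ => fun β' _ => hderiv β' τ)
    have h2 := key.2
    rw [← hR0] at h2
    have heq : (∫ τ : ℝ, F' β τ) = b * (K β * m β) := by
      have hptwise : ∀ τ : ℝ, F' β τ = b * (K β * (τ * gpdf (m β) v τ)) := by
        intro τ
        rw [hF'_def]
        simp only
        rw [show g τ * (τ * (phi (a * τ + b * β) * b))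
            = b * (τ * (g τ * phi (a * τ + b * β))) from by ring, hg_def]
        simp only
        rw [hprod β τ]
        ring
      simp_rw [hptwise]
      rw [integral_const_mul, integral_const_mul, integral_id_mul_gpdf hv]
    rwa [heq] at h2
  -- sign of m
  have hm_eq : ∀ β, m β = τ0 / (4 * σ ^ 2) * (βbayes - β) * v := by
    intro β
    rw [hm_def]
    simp only
    rw [hab, hβbayes]
    field_simp
  have hm_pos : ∀ β, β < βbayes → 0 < m β := by
    intro β hβ
    rw [hm_eq]
    have : 0 < βbayes - β := by linarith
    positivity
  have hm_neg : ∀ β, βbayes < β → m β < 0 := by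
    intro β hβ
    rw [hm_eq]
    have h1 : βbayes - β < 0 := by linarith
    have h2 : (0:ℝ) < τ0 / (4 * σ ^ 2) := by positivity
    exact mul_neg_of_neg_of_pos (mul_neg_of_pos_of_neg h2 h1) hv
  have hcont : Continuous (R 0) :=
    continuous_iff_continuousAt.2 fun β => (hD β).continuousAt
  -- strict monotonicity on Iic / antitonicity on Ici
  have hmono : StrictMonoOn (R 0) (Set.Iic βbayes) := by
    apply strictMonoOn_of_deriv_pos (convex_Iic _) hcont.continuousOn
    intro x hx
    rw [interior_Iic] at hx
    rw [(hD x).deriv]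
    have h1 := hm_pos x hx
    have h2 := hK x
    positivity
  have hanti : StrictAntiOn (R 0) (Set.Ici βbayes) := by
    apply strictAntiOn_of_deriv_neg (convex_Ici _) hcont.continuousOn
    intro x hx
    rw [interior_Ici] at hx
    rw [(hD x).deriv]
    have h1 := hm_neg x hx
    have h2 := hK x
    exact mul_neg_of_pos_of_neg hb (mul_neg_of_pos_of_neg h2 h1)
  refine ⟨hmono.mono (fun x hx => le_of_lt hx.2), hanti.mono Set.Ioi_subset_Ici_self, ?_, ?_⟩
  · intro β hβ
    rcases lt_trichotomy β βbayes with h | h | h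
    · exact (hmono (Set.mem_Iic.mpr h.le) Set.self_mem_Iic h).le
    · rw [h]
    · exact (hanti Set.self_mem_Ici (Set.mem_Ici.mpr h.le) h).le
  · intro z βmax hz hβmax hopt
    by_contra hcon
    push_neg at hcon
    have hc : 0 < s / τ0 * z := by positivity
    have h1 := hopt (βbayes + s / τ0 * z) (by linarith)
    rw [hRz z (βbayes + s / τ0 * z), hRz z βmax] at h1
    have h2 : βbayes + s / τ0 * z - s / τ0 * z = βbayes := by ring
    rw [h2] at h1
    have h3 : βmax - s / τ0 * z < βbayes := by linarith
    have h4 := hmono (Set.mem_Iic.mpr h3.le) Set.self_mem_Iic h3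
    linarith
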